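/- A continuous surjection f: X → Y of digital images is shy if and only if the inverse multivalued function f⁻¹ : Y ⊸ X is connectivity preserving, i.e., for every connected subset B of Y, f⁻¹(B) is connected in X. -/

import Mathlib

/-- A subset `A` is connected under adjacency `κ` if any two of its points are
joined by a path within `A` whose consecutive points are `κ`-adjacent. -/
def DConn {X : Type*} (κ : X → X → Prop) (A : Set X) : Prop :=
  ∀ a ∈ A, ∀ b ∈ A,
    Relation.ReflTransGen (fun u v => κ u v ∧ u ∈ A ∧ v ∈ A) a b

/-- `f` is digitally continuous if images of connected sets are connected. -/
def DCont {X Y : Type*} (κ : X → X → Prop) (lam : Y → Y → Prop) (f : X → Y) : Prop :=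
  ∀ A : Set X, DConn κ A → DConn lam (f '' A)

/-- `f` is shy: a continuous surjection with connected point preimages and
connected preimages of adjacent pairs. -/
def DShy {X Y : Type*} (κ : X → X → Prop) (lam : Y → Y → Prop) (f : X → Y) : Prop :=
  DCont κ lam f ∧ Function.Surjective f ∧
    (∀ y : Y, DConn κ (f ⁻¹' {y})) ∧
    ∀ y₀ y₁ : Y, lam y₀ y₁ → DConn κ (f ⁻¹' {y₀, y₁})

theorem shy_iff_inverse_connectivity_preserving {X Y : Type*}
    (κ : X → X → Prop) (lam : Y → Y → Prop)
    (hκs : Symmetric κ) (hκi : Irreflexive κ)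
    (hls : Symmetric lam) (hli : Irreflexive lam)
    (f : X → Y) (hcont : DCont κ lam f) (hsurj : Function.Surjective f) :
    DShy κ lam f ↔
      ∀ B : Set Y, DConn lam B → DConn κ (⋃ y ∈ B, f ⁻¹' {y}) := by
  have hbu : ∀ B : Set Y, (⋃ y ∈ B, f ⁻¹' {y}) = f ⁻¹' B := by
    intro B; ext x; simp
  constructor
  · rintro ⟨-, -, hsing, hpair⟩ B hB
    rw [hbu]
    intro a ha b hb
    have key : ∀ c, Relation.ReflTransGen
        (fun u v => lam u v ∧ u ∈ B ∧ v ∈ B) (f a) c →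
        ∀ x', f x' = c →
        Relation.ReflTransGen
          (fun u v => κ u v ∧ u ∈ f ⁻¹' B ∧ v ∈ f ⁻¹' B) a x' := by
      intro c hc
      induction hc with
      | refl =>
        intro x' hx'
        have h1 := hsing (f a) a rfl x' hx'
        refine Relation.ReflTransGen.mono ?_ _ _ h1
        rintro u v ⟨hk, hu, hv⟩
        exact ⟨hk, by simp only [Set.mem_preimage, Set.mem_singleton_iff] at hu ⊢; rw [hu]; exact ha,
          by simp only [Set.mem_preimage, Set.mem_singleton_iff] at hv ⊢; rw [hv]; exact ha⟩
      | tail hcd hstep ih =>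
        rename_i c d
        obtain ⟨hl, hcB, hdB⟩ := hstep
        intro x' hx'
        obtain ⟨xc, hxc⟩ := hsurj c
        have p1 := ih xc hxc
        have p2 := hpair c d hl xc (by simp [hxc]) x' (by simp [hx'])
        refine p1.trans (Relation.ReflTransGen.mono ?_ _ _ p2)
        rintro u v ⟨hk, hu, hv⟩
        refine ⟨hk, ?_, ?_⟩
        · rcases hu with hu | hu <;> simp_all [Set.mem_preimage]
        · rcases hv with hv | hv <;> simp_all [Set.mem_preimage]
    exact key (f b) (hB (f a) ha (f b) hb) b rfl
  · intro h
    refine ⟨hcont, hsurj, ?_, ?_⟩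
    · intro y
      have hs : DConn lam ({y} : Set Y) := by
        intro a ha b hb
        simp only [Set.mem_singleton_iff] at ha hb
        subst ha; subst hb; exact Relation.ReflTransGen.refl
      have := h {y} hs
      rwa [hbu] at this
    · intro y₀ y₁ hl
      have hp : DConn lam ({y₀, y₁} : Set Y) := by
        intro a ha b hb
        have s01 : Relation.ReflTransGen
            (fun u v => lam u v ∧ u ∈ ({y₀, y₁} : Set Y) ∧ v ∈ ({y₀, y₁} : Set Y)) y₀ y₁ :=
          Relation.ReflTransGen.single ⟨hl, Or.inl rfl, Or.inr rfl⟩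
        have s10 : Relation.ReflTransGen
            (fun u v => lam u v ∧ u ∈ ({y₀, y₁} : Set Y) ∧ v ∈ ({y₀, y₁} : Set Y)) y₁ y₀ :=
          Relation.ReflTransGen.single ⟨hls hl, Or.inr rfl, Or.inl rfl⟩
        rcases ha with rfl | rfl <;> rcases hb with rfl | rfl
        · exact Relation.ReflTransGen.refl
        · exact s01
        · exact s10
        · exact Relation.ReflTransGen.refl
      have := h {y₀, y₁} hp
      rwa [hbu] at this
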